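/- In the Firefighter problem on the infinite strong grid with initial burned vertex (0,0), firefighters protecting four vertices at each step can contain the fire; moreover there is a valid protection sequence, protecting four unburned, unprotected vertices per step, under which no vertex is burned after step 8, so only finitely many vertices are ever burned. -/
import Mathlib
set_option maxHeartbeats 2000000
set_option maxRecDepth 20000


/-- Adjacency in the infinite strong grid: distinct `(a,b)` and `(c,d)` are adjacent
iff `max |a-c| |b-d| = 1` (this equation already forces the vertices to be distinct). -/
def strongAdj (u v : ℤ × ℤ) : Prop := max |u.1 - v.1| |u.2 - v.2| = 1

/-- The set of vertices protected by the end of step `t`, where `Pfun s` is the set of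
vertices protected during step `s ≥ 1`. -/
def ffProt (Pfun : ℕ → Finset (ℤ × ℤ)) : ℕ → Set (ℤ × ℤ)
  | 0 => ∅
  | t + 1 => ffProt Pfun t ∪ ↑(Pfun (t + 1))

/-- The set of burned vertices at the end of step `t` in the Firefighter problem on the
strong grid with initial burned vertex `(0,0)`: at each step `t+1`, after the vertices
`Pfun (t+1)` are protected, the fire spreads from every burned vertex to every
unprotected neighbour. -/
def ffBurn (Pfun : ℕ → Finset (ℤ × ℤ)) : ℕ → Set (ℤ × ℤ)
  | 0 => {((0 : ℤ), (0 : ℤ))}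
  | t + 1 => ffBurn Pfun t ∪
      {v | (∃ u ∈ ffBurn Pfun t, strongAdj u v) ∧ v ∉ ffProt Pfun (t + 1)}

/-- The eight king-move neighbours of a vertex. -/
def nbrs (u : ℤ × ℤ) : Finset (ℤ × ℤ) :=
  {(u.1-1,u.2-1),(u.1-1,u.2),(u.1-1,u.2+1),(u.1,u.2-1),
   (u.1,u.2+1),(u.1+1,u.2-1),(u.1+1,u.2),(u.1+1,u.2+1)}

lemma max_abs_one (x y : ℤ) :
    max |x| |y| = 1 ↔ (x = -1 ∨ x = 0 ∨ x = 1) ∧ (y = -1 ∨ y = 0 ∨ y = 1) ∧ ¬(x = 0 ∧ y = 0) := by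
  constructor
  · intro h
    have h1 : |x| ≤ 1 := h ▸ le_max_left _ _
    have h2 : |y| ≤ 1 := h ▸ le_max_right _ _
    have h3 : |x| = 1 ∨ |y| = 1 := by
      rcases max_choice |x| |y| with hc | hc <;> rw [h] at hc
      · exact Or.inl hc.symm
      · exact Or.inr hc.symm
    rw [abs_le] at h1 h2
    rcases h3 with h3 | h3 <;> rcases abs_cases x with ⟨hx, _⟩ | ⟨hx, _⟩ <;>
      rcases abs_cases y with ⟨hy, _⟩ | ⟨hy, _⟩ <;> omega
  · rintro ⟨hx, hy, hne⟩
    rcases hx with rfl | rfl | rfl <;> rcases hy with rfl | rfl | rfl <;> revert hne <;> decide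

lemma strongAdj_iff (u v : ℤ × ℤ) : strongAdj u v ↔ v ∈ nbrs u := by
  obtain ⟨a, b⟩ := u
  obtain ⟨c, d⟩ := v
  simp only [strongAdj, nbrs, Finset.mem_insert, Finset.mem_singleton, Prod.mk.injEq,
    max_abs_one]
  omega

/-- The protection strategy: four explicit vertices at each of steps 1–8, and four
far-away "dummy" vertices at every later step. -/
def ffP : ℕ → Finset (ℤ × ℤ)
  | 1 => {(1,0),(-1,-1),(0,-1),(1,-1)}
  | 2 => {(2,2),(-2,-1),(2,1),(2,0)}
  | 3 => {(-3,0),(-3,-1),(-3,1),(2,3)}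
  | 4 => {(-4,4),(-4,1),(-4,3),(-4,2)}
  | 5 => {(3,4),(3,3),(3,5),(-4,5)}
  | 6 => {(-3,6),(3,6),(-4,6),(-2,6)}
  | 7 => {(0,7),(3,7),(-2,7),(-1,7)}
  | 8 => {(3,8),(1,8),(0,8),(2,8)}
  | 0 => ∅
  | (n+9) => {(109+(n:ℤ),0),(109+(n:ℤ),1),(109+(n:ℤ),2),(109+(n:ℤ),3)}

/-- Finset version of the protected set. -/
def Qfin : ℕ → Finset (ℤ × ℤ)
  | 0 => ∅
  | t + 1 => Qfin t ∪ ffP (t + 1)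

/-- Finset version of the burned set. -/
def Bfin : ℕ → Finset (ℤ × ℤ)
  | 0 => {(0,0)}
  | t + 1 => Bfin t ∪ ((Bfin t).biUnion nbrs \ Qfin (t + 1))

lemma prot_eq (t : ℕ) : ffProt ffP t = ↑(Qfin t) := by
  induction t with
  | zero => simp [ffProt, Qfin]
  | succ t ih => simp [ffProt, Qfin, ih]

lemma burn_eq (t : ℕ) : ffBurn ffP t = ↑(Bfin t) := by
  induction t with
  | zero => simp [ffBurn, Bfin]
  | succ t ih =>
    show ffBurn ffP t ∪ _ = _
    rw [ih, prot_eq]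
    ext v
    simp only [Set.mem_union, Set.mem_setOf_eq, Finset.mem_coe, Bfin, Finset.mem_union,
      Finset.mem_sdiff, Finset.mem_biUnion, strongAdj_iff]

lemma Qfin_mono : ∀ {s t : ℕ}, s ≤ t → Qfin s ⊆ Qfin t := by
  intro s t h
  induction h with
  | refl => exact fun _ h => h
  | step h ih => exact fun x hx => Finset.mem_union_left _ (ih hx)

lemma key_subset : (Bfin 8).biUnion nbrs ⊆ Bfin 8 ∪ Qfin 8 := by decide

lemma Bfin_stable : ∀ t : ℕ, 8 ≤ t → Bfin t = Bfin 8 := by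
  intro t ht
  induction t with
  | zero => omega
  | succ t ih =>
    rcases Nat.lt_or_ge t 8 with h | h
    · have : t = 7 := by omega
      subst this; rfl
    · have ih8 := ih h
      show Bfin t ∪ ((Bfin t).biUnion nbrs \ Qfin (t + 1)) = Bfin 8
      rw [ih8]
      apply Finset.union_eq_left.mpr
      intro v hv
      rw [Finset.mem_sdiff] at hv
      rcases Finset.mem_union.mp (key_subset hv.1) with h' | h'
      · exact h'
      · exact absurd (Qfin_mono (by omega) h') hv.2

lemma ffP_far (k : ℕ) :
    ffP (k+9) = {(109+(k:ℤ),0),(109+(k:ℤ),1),(109+(k:ℤ),2),(109+(k:ℤ),3)} := rfl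

lemma ffP_small_bound : ∀ n, n ≤ 8 → ∀ p ∈ ffP n, p.1 ≤ 4 := by decide

lemma Bfin8_bound : ∀ p ∈ Bfin 8, p.1 ≤ 4 := by decide

lemma Qfin_bound (t : ℕ) : ∀ p ∈ Qfin t, p.1 ≤ 100 + (t : ℤ) := by
  induction t with
  | zero => intro p hp; simp [Qfin] at hp
  | succ t ih =>
    intro p hp
    rcases Finset.mem_union.mp hp with h | h
    · have := ih p h; push_cast; linarith
    · rcases Nat.lt_or_ge (t+1) 9 with h9 | h9
      · have := ffP_small_bound (t+1) (by omega) p h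
        push_cast; linarith
      · obtain ⟨k, hk⟩ : ∃ k, t + 1 = k + 9 := ⟨t - 8, by omega⟩
        rw [hk, ffP_far] at h
        simp only [Finset.mem_insert, Finset.mem_singleton] at h
        have hk' : (t : ℤ) = (k : ℤ) + 8 := by omega
        rcases h with rfl | rfl | rfl | rfl <;> push_cast <;> linarith

lemma Bfin_mono : ∀ {s t : ℕ}, s ≤ t → Bfin s ⊆ Bfin t := by
  intro s t h
  induction h with
  | refl => exact fun _ h => h
  | step _ ih => exact fun x hx => Finset.mem_union_left _ (ih hx)

lemma valid_small : ∀ t, t < 9 → ffP (t+1) ∩ (Bfin t ∪ Qfin t) = ∅ := by decide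

lemma card_small : ∀ t, t < 8 → (ffP (t+1)).card = 4 := by decide

lemma far_card (m : ℤ) : ({(m,0),(m,1),(m,2),(m,3)} : Finset (ℤ × ℤ)).card = 4 := by
  rw [show ({(m,0),(m,1),(m,2),(m,3)} : Finset (ℤ × ℤ))
      = insert (m,0) (insert (m,1) (insert (m,2) {(m,3)})) from rfl]
  rw [Finset.card_insert_of_notMem (by simp), Finset.card_insert_of_notMem (by simp),
    Finset.card_insert_of_notMem (by simp), Finset.card_singleton]

/-- In the Firefighter problem on the infinite strong grid with initial burned vertex
`(0,0)`, firefighters protecting four unburned, unprotected vertices at each step can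
contain the fire; indeed there is a valid protection sequence under which no vertex is
burned after step `8`, so only finitely many vertices are ever burned. -/
theorem four_firefighters_contain_strong_grid :
    ∃ Pfun : ℕ → Finset (ℤ × ℤ),
      (∀ t : ℕ, (Pfun (t + 1)).card = 4 ∧
        (↑(Pfun (t + 1)) : Set (ℤ × ℤ)) ∩ (ffBurn Pfun t ∪ ffProt Pfun t) = ∅) ∧
      (∀ t : ℕ, 8 ≤ t → ffBurn Pfun t = ffBurn Pfun 8) ∧
      (⋃ t, ffBurn Pfun t).Finite := by
  refine ⟨ffP, fun t => ⟨?_, ?_⟩, fun t ht => ?_, ?_⟩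
  · -- card
    rcases Nat.lt_or_ge t 8 with h | h
    · exact card_small t h
    · obtain ⟨k, hk⟩ : ∃ k, t + 1 = k + 9 := ⟨t - 8, by omega⟩
      rw [hk, ffP_far]
      exact far_card _
  · -- disjointness
    rw [burn_eq, prot_eq, ← Finset.coe_union]
    rcases Nat.lt_or_ge t 9 with h | h
    · rw [← Finset.coe_inter, valid_small t h, Finset.coe_empty]
    · rw [Set.eq_empty_iff_forall_notMem]
      rintro p ⟨hp1, hp2⟩
      rw [Finset.mem_coe] at hp1
      obtain ⟨k, hk⟩ : ∃ k, t + 1 = k + 9 := ⟨t - 8, by omega⟩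
      rw [hk, ffP_far] at hp1
      have hk' : (109 : ℤ) + (k : ℤ) = 101 + (t : ℤ) := by omega
      have hp1' : p.1 = 101 + (t : ℤ) := by
        simp only [Finset.mem_insert, Finset.mem_singleton] at hp1
        rcases hp1 with rfl | rfl | rfl | rfl <;> simpa using hk'
      rw [Finset.mem_coe, Finset.mem_union] at hp2
      rcases hp2 with h2 | h2
      · rw [Bfin_stable t (by omega)] at h2
        have := Bfin8_bound p h2; omega
      · have := Qfin_bound t p h2; omega
  · -- stability
    rw [burn_eq, burn_eq, Bfin_stable t ht]
  · -- finiteness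
    apply Set.Finite.subset (Bfin 8).finite_toSet
    apply Set.iUnion_subset
    intro t
    rw [burn_eq]
    rcases le_total t 8 with h | h
    · exact Finset.coe_subset.mpr (Bfin_mono h)
    · rw [Bfin_stable t h]
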